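/- Among all tableaux of shape λ with the same content as T_{ℓ̄(λ)} (the tableau whose j-th column is filled entirely with the odd colored symbol j̄), the tableau T_{ℓ̄(λ)} is the unique maximal element with respect to the column dominance preorder ⊴_c, and it is the unique semistandard tableau of that shape and content. -/

import Mathlib

open Finset TensorProduct
open scoped Classical

noncomputable section

namespace Schur

variable {X : Type*}

/-- Parity of the even symbols `0,...,m-1` is `0`, of the odd symbols `m,...,m+n-1` is `1`. -/
def degp (m n : ℕ) : Fin (m + n) → ℕ := fun x => if x.val < m then 0 else 1

/-- Supercommutativity relations for the generators `c_{uv}` of `A(m|n)`. -/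
def Rel (K : Type*) [CommRing K] (par : X → ℕ) :
    FreeAlgebra K (X × X) → FreeAlgebra K (X × X) → Prop := fun a b =>
  ∃ u v : X × X,
    a = FreeAlgebra.ι K u * FreeAlgebra.ι K v ∧
    b = ((-1 : K) ^ ((par u.1 + par u.2) * (par v.1 + par v.2))) •
        (FreeAlgebra.ι K v * FreeAlgebra.ι K u)

/-- The supersymmetric bialgebra `A(m|n)` (as an algebra). -/
abbrev A (K : Type*) [CommRing K] (par : X → ℕ) := RingQuot (Rel K par)

/-- The generator `c_{uv}`. -/
def gen (K : Type*) [CommRing K] (par : X → ℕ) (u v : X) : A K par :=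
  RingQuot.mkAlgHom K (Rel K par) (FreeAlgebra.ι K (u, v))

variable (r : ℕ)

/-- The sign relating `χ_{i,j}` to the ordered monomial `c_{i_1 j_1} ⋯ c_{i_r j_r}`. -/
def chiSign (par : X → ℕ) (i j : Fin r → X) : ℤ :=
  (-1) ^ (∑ t : Fin r, par (i t) *
    ∑ s ∈ univ.filter (fun s => t < s), (par (i s) + par (j s)))

/-- The signed monomial `χ_{i,j}` in `A(m|n,r)`. -/
def chi (K : Type*) [CommRing K] (par : X → ℕ) (i j : Fin r → X) : A K par :=
  chiSign r par i j • ((List.finRange r).map (fun t => gen K par (i t) (j t))).prod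

/-- The sign `(-1)^{s(j,π)}` of the `*`-action: it counts inversions of `π` among
odd entries of `j`. -/
def starSign (par : X → ℕ) (j : Fin r → X) (π : Equiv.Perm (Fin r)) : ℤ :=
  (-1) ^ (univ.filter (fun p : Fin r × Fin r =>
      p.1 < p.2 ∧ π p.2 < π p.1 ∧ par (j p.1) ≠ 0 ∧ par (j p.2) ≠ 0)).card

/-- A basic tableau: a partition shape `lam` together with a bijective labelling of
its cells `(row, col)` by `{1,...,r}`. -/
structure BasicTableau (r : ℕ) where
  lam : ℕ → ℕ
  antitone : ∀ a b : ℕ, a ≤ b → lam b ≤ lam a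
  pos : Fin r → ℕ × ℕ
  mem : ∀ t, (pos t).2 < lam (pos t).1
  inj : Function.Injective pos
  surj : ∀ c : ℕ × ℕ, c.2 < lam c.1 → ∃ t, pos t = c

/-- The row stabilizer `R(T)`. -/
def rowStab (T : BasicTableau r) : Finset (Equiv.Perm (Fin r)) :=
  univ.filter (fun σ => ∀ t, (T.pos (σ t)).1 = (T.pos t).1)

/-- The column stabilizer `C(T)`. -/
def colStab (T : BasicTableau r) : Finset (Equiv.Perm (Fin r)) :=
  univ.filter (fun σ => ∀ t, (T.pos (σ t)).2 = (T.pos t).2)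

/-- The symmetrizer `T[i:j] = Σ_{ρ∈R(T)} Σ_{κ∈C(T)} sgn(κ) χ_{i*ρ, j*κ}`. -/
def symmA (K : Type*) [CommRing K] (par : X → ℕ) (T : BasicTableau r)
    (i j : Fin r → X) : A K par :=
  ∑ ρ ∈ rowStab r T, ∑ κ ∈ colStab r T,
    ((Equiv.Perm.sign κ : ℤ) * starSign r par i ρ * starSign r par j κ) •
      chi r K par (i ∘ ρ) (j ∘ κ)

/-- The symmetrizer in the form `T[i:j] = Σ_{ρ∈R(T)} Σ_{κ∈C(T)} sgn(κ) χ_{i, j*κ*ρ}`. -/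
def symmB (K : Type*) [CommRing K] (par : X → ℕ) (T : BasicTableau r)
    (i j : Fin r → X) : A K par :=
  ∑ ρ ∈ rowStab r T, ∑ κ ∈ colStab r T,
    ((Equiv.Perm.sign κ : ℤ) * starSign r par j κ * starSign r par (j ∘ κ) ρ) •
      chi r K par i (j ∘ κ ∘ ρ)

/-- The symmetrizer in the form `T[i:j] = Σ_{κ∈C(T)} Σ_{ρ∈R(T)} sgn(κ) χ_{i*ρ*κ, j}`. -/
def symmC (K : Type*) [CommRing K] (par : X → ℕ) (T : BasicTableau r)
    (i j : Fin r → X) : A K par :=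
  ∑ κ ∈ colStab r T, ∑ ρ ∈ rowStab r T,
    ((Equiv.Perm.sign κ : ℤ) * starSign r par i ρ * starSign r par (i ∘ ρ) κ) •
      chi r K par (i ∘ ρ ∘ κ) j

/-- Semistandardness (in the super sense) of the filling `j` of the tableau `T`. -/
def Semistandard [LinearOrder X] (par : X → ℕ) (T : BasicTableau r)
    (j : Fin r → X) : Prop :=
  (∀ t s, (T.pos t).1 = (T.pos s).1 → (T.pos t).2 ≤ (T.pos s).2 → j t ≤ j s) ∧
  (∀ t s, (T.pos t).2 = (T.pos s).2 → (T.pos t).1 ≤ (T.pos s).1 → j t ≤ j s) ∧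
  (∀ t s, t ≠ s → (T.pos t).2 = (T.pos s).2 → par (j t) = 0 → j t ≠ j s) ∧
  (∀ t s, t ≠ s → (T.pos t).1 = (T.pos s).1 → par (j t) ≠ 0 → j t ≠ j s)

/-- `r_{qp}`: the number of entries `≤ p` in the first `q` rows. -/
def rCount [LinearOrder X] (T : BasicTableau r) (j : Fin r → X) (q : ℕ) (p : X) : ℕ :=
  (univ.filter (fun t => (T.pos t).1 < q ∧ j t ≤ p)).card

/-- `c_{qp}`: the number of entries `≤ p` in the first `q` columns. -/
def cCount [LinearOrder X] (T : BasicTableau r) (j : Fin r → X) (q : ℕ) (p : X) : ℕ :=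
  (univ.filter (fun t => (T.pos t).2 < q ∧ j t ≤ p)).card

/-- Row dominance preorder `T_l ⊴_r T_j`: `(r_{qp}(l)) ≤_lex (r_{qp}(j))`,
listing first by `q`, then by `p`. -/
def rowDom [LinearOrder X] (T : BasicTableau r) (l j : Fin r → X) : Prop :=
  (∀ q p, rCount r T l q p = rCount r T j q p) ∨
  ∃ (q : ℕ) (p : X), rCount r T l q p < rCount r T j q p ∧
    ∀ (q' : ℕ) (p' : X), (q' < q ∨ (q' = q ∧ p' < p)) →
      rCount r T l q' p' = rCount r T j q' p'

/-- Column dominance preorder `T_k ⊴_c T_i`: `(c_{qp}(k)) ≤_lex (c_{qp}(i))`. -/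
def colDom [LinearOrder X] (T : BasicTableau r) (k i : Fin r → X) : Prop :=
  (∀ q p, cCount r T k q p = cCount r T i q p) ∨
  ∃ (q : ℕ) (p : X), cCount r T k q p < cCount r T i q p ∧
    ∀ (q' : ℕ) (p' : X), (q' < q ∨ (q' = q ∧ p' < p)) →
      cCount r T k q' p' = cCount r T i q' p'

/-- `σ` moves only points of `Z`; i.e. `σ ∈ S_Z`. -/
def fixesOutside (Z : Finset (Fin r)) (σ : Equiv.Perm (Fin r)) : Prop :=
  ∀ t, t ∉ Z → σ t = t

/-- Membership in the subgroup `S_X × S_Y` of `S_{X∪Y}`. -/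
def prodSub (Xs Ys : Finset (Fin r)) (σ : Equiv.Perm (Fin r)) : Prop :=
  (∀ t ∈ Xs, σ t ∈ Xs) ∧ (∀ t ∈ Ys, σ t ∈ Ys) ∧ fixesOutside r (Xs ∪ Ys) σ

/-- Two fillings have the same content. -/
def sameContent (i j : Fin r → X) : Prop :=
  ∀ v : X, (univ.filter (fun t => i t = v)).card = (univ.filter (fun t => j t = v)).card

/-- `f < g` in the column lexicographic order: at the first cell (reading column by
column, each column top to bottom) where they differ, `f` is smaller. -/
def colLexLt [LinearOrder X] (T : BasicTableau r) (f g : Fin r → X) : Prop :=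
  ∃ t, f t < g t ∧ ∀ s,
    ((T.pos s).2 < (T.pos t).2 ∨ ((T.pos s).2 = (T.pos t).2 ∧ (T.pos s).1 < (T.pos t).1)) →
    f s = g s

/-- `r(T_i)`: product of factorials of row multiplicities of even symbols. -/
def rFact [Fintype X] (par : X → ℕ) (T : BasicTableau r) (i : Fin r → X) : ℕ :=
  ∏ a : X, ∏ q ∈ Finset.range r,
    if par a = 0 then
      Nat.factorial (univ.filter (fun t => i t = a ∧ (T.pos t).1 = q)).card
    else 1

/-- `c(T_j)`: product of factorials of column multiplicities of odd symbols. -/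
def cFact [Fintype X] (par : X → ℕ) (T : BasicTableau r) (j : Fin r → X) : ℕ :=
  ∏ a : X, ∏ q ∈ Finset.range r,
    if par a ≠ 0 then
      Nat.factorial (univ.filter (fun t => j t = a ∧ (T.pos t).2 = q)).card
    else 1

/-- The modified symmetrizer `T{i:j} = T[i:j]/(r(T_i)c(T_j))` over `ℚ`. -/
def modSymm (m n : ℕ) (T : BasicTableau r) (i j : Fin r → Fin (m + n)) :
    A ℚ (degp m n) :=
  (((rFact r (degp m n) T i * cFact r (degp m n) T j : ℕ) : ℚ))⁻¹ •
    symmA r ℚ (degp m n) T i j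


section Aux

private lemma card_le_content (r : ℕ) (f g : Fin r → ℕ) (h : sameContent r f g) (p : ℕ) :
    (univ.filter (fun t => f t ≤ p)).card = (univ.filter (fun t => g t ≤ p)).card := by
  have key : ∀ h : Fin r → ℕ, (univ.filter (fun t => h t ≤ p)).card
      = ∑ v ∈ Finset.range (p+1), (univ.filter (fun t => h t = v)).card := by
    intro h
    rw [Finset.card_eq_sum_card_fiberwise (t := Finset.range (p+1)) (f := h)
      (fun x hx => by simp only [Finset.mem_coe, Finset.mem_filter] at hx
                      simp [Nat.lt_succ_iff, hx.2])]
    refine Finset.sum_congr rfl fun v hv => ?_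
    congr 1
    rw [Finset.filter_filter]
    ext t
    simp only [Finset.mem_filter, Finset.mem_univ, true_and, Finset.mem_range] at *
    omega
  rw [key f, key g]
  refine Finset.sum_congr rfl fun v _ => ?_
  have := h v
  convert this using 2 <;> (ext t; simp)

/-- pointwise comparison of column counts -/
private lemma cCount_le (r : ℕ) (T : BasicTableau r) (f : Fin r → ℕ)
    (h : sameContent r f (fun t => (T.pos t).2)) (q p : ℕ) :
    cCount r T f q p ≤ cCount r T (fun t => (T.pos t).2) q p := by
  unfold cCount
  by_cases hq : q ≤ p + 1
  · apply Finset.card_le_card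
    intro t ht
    simp only [Finset.mem_filter, Finset.mem_univ, true_and] at *
    omega
  · calc (univ.filter (fun t => (T.pos t).2 < q ∧ f t ≤ p)).card
        ≤ (univ.filter (fun t => f t ≤ p)).card := by
          apply Finset.card_le_card
          intro t ht
          simp only [Finset.mem_filter, Finset.mem_univ, true_and] at *
          exact ht.2
      _ = (univ.filter (fun t => (T.pos t).2 ≤ p)).card := card_le_content r f _ h p
      _ = (univ.filter (fun t => (T.pos t).2 < q ∧ (T.pos t).2 ≤ p)).card := by
          congr 1
          ext t
          simp only [Finset.mem_filter, Finset.mem_univ, true_and]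
          omega

private lemma eq_of_counts (r : ℕ) (T : BasicTableau r) (f : Fin r → ℕ)
    (h : ∀ q p, cCount r T f q p = cCount r T (fun t => (T.pos t).2) q p) :
    f = fun t => (T.pos t).2 := by
  funext t
  set q := (T.pos t).2 with hq
  -- upper bound: f t ≤ q
  have hupper : f t ≤ q := by
    have hcardB : cCount r T (fun t => (T.pos t).2) (q+1) q
        = (univ.filter (fun s => (T.pos s).2 < q + 1)).card := by
      unfold cCount
      congr 1
      ext s
      simp only [Finset.mem_filter, Finset.mem_univ, true_and]
      omega
    have hsub : (univ.filter (fun s => (T.pos s).2 < q + 1 ∧ f s ≤ q))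
        ⊆ (univ.filter (fun s => (T.pos s).2 < q + 1)) := by
      intro s hs
      simp only [Finset.mem_filter, Finset.mem_univ, true_and] at *
      exact hs.1
    have heq := Finset.eq_of_subset_of_card_le hsub (by
      have := h (q+1) q
      rw [hcardB] at this
      unfold cCount at this
      omega)
    have ht : t ∈ (univ.filter (fun s => (T.pos s).2 < q + 1)) := by
      simp [hq]
    rw [← heq] at ht
    simp only [Finset.mem_filter, Finset.mem_univ, true_and] at ht
    exact ht.2
  -- lower bound
  rcases Nat.eq_zero_or_pos q with h0 | hpos
  · omega
  · by_contra hlt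
    have hflt : f t ≤ q - 1 := by omega
    have hc0 : cCount r T (fun t => (T.pos t).2) q (q-1)
        = (univ.filter (fun s => (T.pos s).2 < q)).card := by
      unfold cCount
      congr 1
      ext s
      simp only [Finset.mem_filter, Finset.mem_univ, true_and]
      omega
    have hc1 : cCount r T (fun t => (T.pos t).2) (q+1) (q-1)
        = (univ.filter (fun s => (T.pos s).2 < q)).card := by
      unfold cCount
      congr 1
      ext s
      simp only [Finset.mem_filter, Finset.mem_univ, true_and]
      omega
    have hsub : (univ.filter (fun s => (T.pos s).2 < q ∧ f s ≤ q-1))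
        ⊆ (univ.filter (fun s => (T.pos s).2 < q + 1 ∧ f s ≤ q-1)) := by
      intro s hs
      simp only [Finset.mem_filter, Finset.mem_univ, true_and] at *
      omega
    have heq := Finset.eq_of_subset_of_card_le hsub (by
      have e0 := h q (q-1); have e1 := h (q+1) (q-1)
      rw [hc0] at e0
      rw [hc1] at e1
      unfold cCount at e0 e1
      omega)
    have ht : t ∈ (univ.filter (fun s => (T.pos s).2 < q + 1 ∧ f s ≤ q - 1)) := by
      simp only [Finset.mem_filter, Finset.mem_univ, true_and]
      omega
    rw [← heq] at ht
    simp only [Finset.mem_filter, Finset.mem_univ, true_and] at ht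
    omega

private lemma colDom_of_ptwise (r : ℕ) (T : BasicTableau r) (f g : Fin r → ℕ)
    (hle : ∀ q p, cCount r T f q p ≤ cCount r T g q p) :
    colDom r T f g := by
  by_cases hall : ∀ q p, cCount r T f q p = cCount r T g q p
  · exact Or.inl hall
  · right
    push_neg at hall
    have hq : ∃ q, ∃ p, cCount r T f q p ≠ cCount r T g q p := hall
    set q0 := Nat.find hq with hq0
    have hp : ∃ p, cCount r T f q0 p ≠ cCount r T g q0 p := Nat.find_spec hq
    set p0 := Nat.find hp with hp0
    refine ⟨q0, p0, lt_of_le_of_ne (hle q0 p0) (Nat.find_spec hp), ?_⟩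
    rintro q' p' (hlt | ⟨rfl, hlt⟩)
    · by_contra hne
      exact Nat.find_min hq hlt ⟨p', hne⟩
    · by_contra hne
      exact Nat.find_min hp hlt hne

private lemma ge_col (r : ℕ) (T : BasicTableau r) (f : Fin r → ℕ)
    (hss : Semistandard r (fun _ : ℕ => 1) T f) : ∀ t, (T.pos t).2 ≤ f t := by
  suffices H : ∀ c t, (T.pos t).2 = c → c ≤ f t by
    intro t; exact H _ t rfl
  intro c
  induction c with
  | zero => intro t _; exact Nat.zero_le _
  | succ c ih =>
    intro t ht
    obtain ⟨s, hs⟩ := T.surj ((T.pos t).1, c) (by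
      have := T.mem t
      simp only []
      omega)
    have hrow : (T.pos s).1 = (T.pos t).1 := by rw [hs]
    have hcol : (T.pos s).2 = c := by rw [hs]
    have hts : t ≠ s := by
      intro he
      rw [he, hcol] at ht
      omega
    have h1 : f s ≤ f t := hss.1 s t hrow (by omega)
    have h2 : f t ≠ f s := hss.2.2.2 t s hts hrow.symm one_ne_zero
    have h3 : c ≤ f s := ih s hcol
    omega

end Aux

/-- among tableaux of shape `λ` with the same content as `T_{ℓ̄(λ)}`
(column `j` filled with the odd colored symbol `j̄`), `T_{ℓ̄(λ)}` is the unique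
maximal element for `⊴_c` and the unique semistandard tableau. Here the alphabet of
colored symbols `j̄` is `ℕ` and every symbol is odd (`par = 1`). -/
theorem stmt12 (r : ℕ) (T : BasicTableau r) :
    (∀ f : Fin r → ℕ, sameContent r f (fun t => (T.pos t).2) →
        colDom r T f (fun t => (T.pos t).2)) ∧
    (∀ f : Fin r → ℕ, sameContent r f (fun t => (T.pos t).2) →
        colDom r T (fun t => (T.pos t).2) f → f = fun t => (T.pos t).2) ∧
    Semistandard r (fun _ : ℕ => 1) T (fun t => (T.pos t).2) ∧
    (∀ f : Fin r → ℕ, sameContent r f (fun t => (T.pos t).2) →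
        Semistandard r (fun _ : ℕ => 1) T f → f = fun t => (T.pos t).2) := by
  have glem := cCount_le r T
  refine ⟨fun f hf => colDom_of_ptwise r T f _ (glem f hf), ?_, ?_, ?_⟩
  · intro f hf hdom
    rcases hdom with hall | ⟨q, p, hlt, _⟩
    · exact eq_of_counts r T f (fun q p => (hall q p).symm)
    · exact absurd (glem f hf q p) (not_le_of_gt hlt)
  · refine ⟨fun t s _ h => h, fun t s h _ => h.le, fun t s _ _ h => absurd h one_ne_zero,
      fun t s hts hrow _ => ?_⟩
    intro hcol
    exact hts (T.inj (Prod.ext hrow hcol))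
  · intro f hf hss
    have hge := ge_col r T f hss
    funext t
    have key : ∀ p, (univ.filter (fun s => f s ≤ p)) = (univ.filter (fun s => (T.pos s).2 ≤ p)) := by
      intro p
      refine Finset.eq_of_subset_of_card_le ?_ (card_le_content r f _ hf p).ge
      intro s hsm
      simp only [Finset.mem_filter, Finset.mem_univ, true_and] at *
      exact le_trans (hge s) hsm
    have h1 : t ∈ (univ.filter (fun s => f s ≤ (T.pos t).2)) := by
      rw [key]
      simp
    simp only [Finset.mem_filter, Finset.mem_univ, true_and] at h1
    exact le_antisymm h1 (hge t)

end Schur
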